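/- Let w be a complex number with |w| = 1, w ≠ 1, and let u, n be positive integers with u ≥ n ≥ 1 such that w^k ≠ 1 for all k = 1,…,u. Then sgn(Re(i(w^{n+1}−1)/((w−1)(w^n−1)))) = sgn(f_n(φ)) where w = e^{iφ} and f_n(φ) = −sin((n+1)φ) + sin(nφ) + sin(φ). In particular, i(w^{n+1}−1)/((w−1)(w^n−1)) is real. -/

import Mathlib

open Real

/-- The sign of a real number, as an integer: `x/|x|` for `x ≠ 0` and `0` for `x = 0`. -/
noncomputable def sgnR (x : ℝ) : ℤ := if 0 < x then 1 else if x < 0 then -1 else 0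

/-- for `w = e^{iφ}` on the unit circle with `w ≠ 1`, `u ≥ n ≥ 1` and
`w^k ≠ 1` for `k = 1,…,u`, the quantity `i(w^{n+1}−1)/((w−1)(w^n−1))` is real and its
sign equals the sign of `f_n(φ) = −sin((n+1)φ) + sin(nφ) + sin(φ)`. -/
theorem sgn_quotient_eq_sgn_f (w : ℂ) (φ : ℝ) (hw : w = Complex.exp (φ * Complex.I))
    (habs : ‖w‖ = 1) (hw1 : w ≠ 1)
    (u n : ℕ) (hn : 1 ≤ n) (hun : n ≤ u)
    (hroots : ∀ k : ℕ, 1 ≤ k → k ≤ u → w ^ k ≠ 1) :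
    (Complex.I * (w ^ (n + 1) - 1) / ((w - 1) * (w ^ n - 1))).im = 0 ∧
    sgnR (Complex.I * (w ^ (n + 1) - 1) / ((w - 1) * (w ^ n - 1))).re =
      sgnR (-Real.sin ((n + 1) * φ) + Real.sin (n * φ) + Real.sin φ) := by
  have hwn : w ^ n ≠ 1 := hroots n hn hun
  have hw0 : w ≠ 0 := by rw [hw]; exact Complex.exp_ne_zero _
  have hD : (w - 1) * (w ^ n - 1) ≠ 0 :=
    mul_ne_zero (sub_ne_zero.2 hw1) (sub_ne_zero.2 hwn)
  have hconj : (starRingEnd ℂ) w = w⁻¹ := (Complex.inv_eq_conj habs).symm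
  set f : ℝ := -Real.sin ((n + 1) * φ) + Real.sin (n * φ) + Real.sin φ with hf
  have hsin : ∀ k : ℕ, 2 * Complex.I * (Real.sin ((k : ℝ) * φ) : ℂ) = w ^ k - (w ^ k)⁻¹ := by
    intro k
    rw [Complex.ofReal_sin]
    have h1 : ((((k : ℝ) * φ : ℝ)) : ℂ) * Complex.I = (k : ℂ) * (φ * Complex.I) := by
      push_cast; ring
    rw [Complex.sin, hw, ← Complex.exp_nat_mul, ← Complex.exp_neg]
    rw [show -(((((k : ℝ) * φ : ℝ)) : ℂ)) * Complex.I = -((k : ℂ) * (φ * Complex.I)) by push_cast; ring, h1]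
    have := Complex.I_sq
    field_simp
    ring_nf
    rw [Complex.I_sq]
    ring
  have key : Complex.I * (w ^ (n + 1) - 1) * (starRingEnd ℂ) ((w - 1) * (w ^ n - 1)) =
      ((2 * f : ℝ) : ℂ) := by
    have h1 := hsin (n + 1)
    have h2 := hsin n
    have h3 := hsin 1
    rw [map_mul, map_sub, map_sub, map_pow, hconj, map_one]
    rw [hf]
    push_cast
    push_cast at h1 h2 h3
    simp only [one_mul, pow_one] at h3
    rw [← inv_pow] at h1 h2
    have hab : w * w⁻¹ = 1 := mul_inv_cancel₀ hw0
    have hAB : w ^ n * w⁻¹ ^ n = 1 := by rw [← mul_pow, hab, one_pow]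
    have hI2 : Complex.I ^ 2 = -1 := Complex.I_sq
    apply mul_left_cancel₀ (pow_ne_zero (n + 1) hw0)
    linear_combination (-Complex.I * w ^ (n + 1)) * h1 + (Complex.I * w ^ (n + 1)) * h2 +
      (Complex.I * w ^ (n + 1)) * h3 +
      (2 * w ^ (n + 1) * (Complex.sin (((n : ℂ) + 1) * (φ : ℂ)) - Complex.sin ((n : ℂ) * (φ : ℂ)) -
        Complex.sin ((φ : ℝ) : ℂ))) * hI2 +
      (Complex.I * w ^ (n + 1) * (1 - w ^ n + (w ^ n * w⁻¹ ^ n - 1))) * hab +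
      (Complex.I * w ^ (n + 1) * (1 - w)) * hAB
  have hns : (0 : ℝ) < Complex.normSq ((w - 1) * (w ^ n - 1)) := by
    rwa [Complex.normSq_pos]
  have hconjD : (starRingEnd ℂ) ((w - 1) * (w ^ n - 1)) ≠ 0 :=
    (map_ne_zero _).2 hD
  have hnsC : ((Complex.normSq ((w - 1) * (w ^ n - 1)) : ℝ) : ℂ) ≠ 0 := by
    exact_mod_cast hns.ne'
  have hz : Complex.I * (w ^ (n + 1) - 1) / ((w - 1) * (w ^ n - 1)) =
      ((2 * f / Complex.normSq ((w - 1) * (w ^ n - 1)) : ℝ) : ℂ) := by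
    rw [div_eq_iff hD, Complex.ofReal_div, div_mul_eq_mul_div, eq_div_iff hnsC,
      ← Complex.mul_conj]
    linear_combination ((w - 1) * (w ^ n - 1)) * key
  rw [hz]
  constructor
  · exact Complex.ofReal_im _
  · rw [Complex.ofReal_re]
    set s := Complex.normSq ((w - 1) * (w ^ n - 1))
    have hp : (0 < 2 * f / s) = (0 < f) := by
      rw [eq_iff_iff, div_pos_iff]
      constructor
      · rintro (⟨h, -⟩ | ⟨-, h⟩) <;> linarith
      · intro h; exact Or.inl ⟨by linarith, hns⟩
    have hq : (2 * f / s < 0) = (f < 0) := by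
      rw [eq_iff_iff, div_neg_iff]
      constructor
      · rintro (⟨h, h'⟩ | ⟨h, -⟩) <;> linarith
      · intro h; exact Or.inr ⟨by linarith, hns⟩
    simp only [sgnR, hp, hq]
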